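/- Let R be a commutative ring and x ∈ R a nonunit. Then x is a parameter on R (i.e., x is weakly proregular, xR ≠ R, and H^1_x(R)_p ≠ 0 for all primes p containing x) if and only if ht(xR) ≥ 1 and (0 : x^n) = (0 : x^{n+1}) for some n ≥ 1. -/

import Mathlib

/-- The natural map between localizations of a module at powers of two elements
`a ∣ b`, sending `m/1` to `m/1`. -/

noncomputable def cechLoc {R : Type*} [CommRing R] {M : Type*} [AddCommGroup M] [Module R M]
    (a b : R) (hab : a ∣ b) :
    LocalizedModule (Submonoid.powers a) M →ₗ[R] LocalizedModule (Submonoid.powers b) M :=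
  LocalizedModule.lift _ (LocalizedModule.mkLinearMap (Submonoid.powers b) M) (by
    rintro ⟨s, n, rfl⟩
    obtain ⟨c, rfl⟩ := hab
    set f := algebraMap R (Module.End R (LocalizedModule (Submonoid.powers (a * c)) M)) with hf
    obtain ⟨u, hu⟩ := IsLocalizedModule.map_units
      (LocalizedModule.mkLinearMap (Submonoid.powers (a * c)) M)
      (⟨(a * c) ^ n, n, rfl⟩ : Submonoid.powers (a * c))
    have hcomm : Commute (f (a ^ n)) ↑u := by
      have : Commute (f (a ^ n)) (f ((a * c) ^ n)) := by
        simp only [Commute, SemiconjBy, ← map_mul, mul_comm]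
      rwa [← hu] at this
    refine ⟨⟨f (a ^ n), f (c ^ n) * ↑u⁻¹, ?_, ?_⟩, rfl⟩
    · rw [← mul_assoc, ← map_mul, ← mul_pow, ← hu]
      exact u.mul_inv
    · rw [mul_assoc, ← (hcomm.units_inv_right).eq, ← mul_assoc, ← map_mul]
      have : c ^ n * a ^ n = (a * c) ^ n := by ring
      rw [this, ← hu]
      exact u.mul_inv)

open scoped BigOperators
open Classical

noncomputable section

variable {R : Type*} [CommRing R]

/-- Degree `i` term of the Čech complex of the sequence `x` with coefficients in `M`:
the product over `i`-element subsets `t` of the index set of the localization of `M`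
at the product of the `x j` for `j ∈ t`. -/
noncomputable abbrev CechC {ℓ : ℕ} (x : Fin ℓ → R) (M : Type*) [AddCommGroup M] [Module R M]
    (i : ℕ) : Type _ :=
  ∀ t : {t : Finset (Fin ℓ) // t.card = i}, LocalizedModule (Submonoid.powers (∏ j ∈ t.1, x j)) M

/-- The Čech differential `C^i → C^{i+1}`: the alternating sum of the further-localization
maps. -/
noncomputable def cechD {ℓ : ℕ} (x : Fin ℓ → R) (M : Type*) [AddCommGroup M] [Module R M]
    (i : ℕ) : CechC x M i →ₗ[R] CechC x M (i + 1) where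
  toFun m t := ∑ j ∈ (t.1).attach,
    ((-1 : ℤ) ^ ((t.1.filter (· < j.1)).card)) •
      cechLoc (∏ k ∈ t.1.erase j.1, x k) (∏ k ∈ t.1, x k)
        (Finset.prod_dvd_prod_of_subset _ _ _ (Finset.erase_subset _ _))
        (m ⟨t.1.erase j.1, by rw [Finset.card_erase_of_mem j.2, t.2]; omega⟩)
  map_add' := by
    intro a b
    funext t
    simp [Pi.add_apply, map_add, smul_add, Finset.sum_add_distrib]
    rw [← Finset.sum_add_distrib]
    refine Finset.sum_congr rfl fun j _ => ?_
    first
      | exact smul_add _ _ _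
      | exact (DistribSMul.smul_add _ _ _)
      | (rw [zsmul_eq_mul]; ring)
      | module
  map_smul' := by
    intro r a
    funext t
    simp [Pi.smul_apply, map_smul, Finset.smul_sum, smul_comm r]

/-- The submodule of Čech coboundaries in degree `i`. -/
noncomputable def cechPrevRange {ℓ : ℕ} (x : Fin ℓ → R) (M : Type*) [AddCommGroup M]
    [Module R M] : (i : ℕ) → Submodule R (CechC x M i)
  | 0 => ⊥
  | (i + 1) => LinearMap.range (cechD x M i)

/-- The `i`-th Čech cohomology of `M` with respect to the sequence `x`:
cocycles modulo coboundaries. -/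
noncomputable abbrev CechH {ℓ : ℕ} (x : Fin ℓ → R) (M : Type*) [AddCommGroup M] [Module R M]
    (i : ℕ) : Type _ :=
  LinearMap.ker (cechD x M i) ⧸
    (cechPrevRange x M i).comap (LinearMap.ker (cechD x M i)).subtype


/-- Degree `i` term of the Koszul complex on `ℓ` elements: free module indexed by
`i`-element subsets of the index set. -/
abbrev KoszulC (R : Type*) [CommRing R] (ℓ i : ℕ) : Type _ :=
  {t : Finset (Fin ℓ) // t.card = i} → R

/-- The Koszul differential `K_{i+1} → K_i` for the sequence `x^k = x_1^k, ..., x_ℓ^k`. -/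
noncomputable def koszulD {ℓ : ℕ} (x : Fin ℓ → R) (k : ℕ) (i : ℕ) :
    KoszulC R ℓ (i + 1) →ₗ[R] KoszulC R ℓ i where
  toFun m s := ∑ j ∈ (s.1ᶜ).attach,
    ((-1 : ℤ) ^ ((s.1.filter (· < j.1)).card)) •
      ((x j.1 ^ k) * m ⟨insert j.1 s.1, by
        rw [Finset.card_insert_of_notMem (Finset.mem_compl.mp j.2), s.2]⟩)
  map_add' := by
    intro a b
    funext s
    simp [mul_add, smul_add, Finset.sum_add_distrib]
  map_smul' := by
    intro r a
    funext s
    simp [Finset.mul_sum, mul_smul_comm, mul_left_comm]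
  
/-- The standard transition chain map `K(x^m) → K(x^n)` (for `n ≤ m`) in degree `i`:
multiplication on the component indexed by `t` by `∏_{j ∈ t} x_j^{m-n}`. -/
noncomputable def koszulTr {ℓ : ℕ} (x : Fin ℓ → R) (m n i : ℕ) :
    KoszulC R ℓ i →ₗ[R] KoszulC R ℓ i where
  toFun z t := (∏ j ∈ t.1, x j ^ (m - n)) * z t
  map_add' := by intro a b; funext t; simp [mul_add]
  map_smul' := by intro r a; funext t; simp; ring

/-- A finite sequence `x` is weakly proregular if for each `n` there is `m ≥ n` such that
the transition maps `H_i(x^m; R) → H_i(x^n; R)` on Koszul homology vanish for all `i ≥ 1`;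
equivalently, the transition image of every cycle is a boundary. -/
def WeaklyProregular {ℓ : ℕ} (x : Fin ℓ → R) : Prop :=
  ∀ n : ℕ, 1 ≤ n → ∃ m, n ≤ m ∧ ∀ i : ℕ, ∀ z : KoszulC R ℓ (i + 1),
    koszulD x m i z = 0 →
      ∃ b : KoszulC R ℓ (i + 1 + 1), koszulD x n (i + 1) b = koszulTr x m n (i + 1) z

/-- The height of an ideal: the infimum of the heights of the primes containing it. -/
noncomputable def idealHeight (I : Ideal R) : ℕ∞ :=
  ⨅ p : {p : PrimeSpectrum R // I ≤ p.asIdeal}, Order.height p.1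


/-- A finite sequence `x` (given as a list `l`) is a parameter sequence on `R` if it is
weakly proregular, generates a proper ideal, and the localized top Čech cohomology
`H^{ℓ(x)}_x(R)_p` is nonzero for every prime `p` containing `(x)R`. -/
def IsParamSeq (l : List R) : Prop :=
  WeaklyProregular l.get ∧ Ideal.span {a | a ∈ l} ≠ ⊤ ∧
    ∀ p : PrimeSpectrum R, Ideal.span {a | a ∈ l} ≤ p.asIdeal →
      Nontrivial (LocalizedModule p.asIdeal.primeCompl (CechH l.get R l.length))

/-- A strong parameter sequence: every initial segment is a parameter sequence. -/
def IsStrongParamSeq (l : List R) : Prop :=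
  ∀ i : ℕ, i ≤ l.length → IsParamSeq (l.take i)

section TestA
variable {R : Type*} [CommRing R]

lemma fin1_subtype_one (t : {t : Finset (Fin 1) // t.card = 1}) : t = ⟨{0}, rfl⟩ := by
  obtain ⟨t, ht⟩ := t
  obtain ⟨a, rfl⟩ := Finset.card_eq_one.mp ht
  exact Subtype.ext (by simp [Subsingleton.elim a 0])

lemma fin1_subtype_zero (t : {t : Finset (Fin 1) // t.card = 0}) : t = ⟨∅, rfl⟩ := by
  obtain ⟨t, ht⟩ := t
  exact Subtype.ext (Finset.card_eq_zero.mp ht)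

lemma koszulD0_apply (x : R) (m : ℕ) (z : KoszulC R 1 1) (s : {t : Finset (Fin 1) // t.card = 0}) :
    koszulD ![x] m 0 z s = x ^ m * z ⟨{0}, rfl⟩ := by
  obtain ⟨s, hs⟩ := s
  obtain rfl := Finset.card_eq_zero.mp hs
  show ∑ j ∈ ((∅ : Finset (Fin 1))ᶜ).attach, _ = _
  have hmem : (0 : Fin 1) ∈ (∅ : Finset (Fin 1))ᶜ := by simp
  rw [show ((∅ : Finset (Fin 1))ᶜ).attach = {⟨0, hmem⟩} from by
    ext j; simp [Subtype.ext_iff, Subsingleton.elim j.1 0]]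
  rw [Finset.sum_singleton]
  simp only [Finset.filter_empty, Finset.card_empty, pow_zero, one_smul]
  congr 1

end TestA

section PartA
variable {R : Type*} [CommRing R]

lemma fin1_no_big {i : ℕ} (t : {t : Finset (Fin 1) // t.card = i + 2}) : False := by
  have := Finset.card_le_univ t.1
  rw [t.2] at this
  simp at this

lemma koszulD1_zero (x : R) (n : ℕ) (b : KoszulC R 1 2) (t : {t : Finset (Fin 1) // t.card = 1}) :
    koszulD ![x] n 1 b t = 0 := by
  obtain rfl := fin1_subtype_one t
  simp only [koszulD, LinearMap.coe_mk, AddHom.coe_mk]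
  refine Finset.sum_eq_zero fun j _ => absurd j.2 ?_
  simp [Subsingleton.elim (j : Fin 1) 0]

lemma koszulTr_apply (x : R) (m n : ℕ) (z : KoszulC R 1 1)
    (t : {t : Finset (Fin 1) // t.card = 1}) :
    koszulTr ![x] m n 1 z t = x ^ (m - n) * z t := by
  obtain rfl := fin1_subtype_one t
  show (∏ j ∈ ({0} : Finset (Fin 1)), ![x] j ^ (m - n)) * z _ = _
  simp

lemma ann_stab_of (x : R) (n : ℕ) (hst : ∀ r : R, r * x ^ n = 0 ↔ r * x ^ (n + 1) = 0) :
    ∀ j, ∀ r : R, r * x ^ (n + j) = 0 → r * x ^ n = 0 := by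
  intro j
  induction j with
  | zero => intro r h; exact h
  | succ j ih =>
    intro r h
    have h1 : (r * x) * x ^ (n + j) = 0 := by
      have e : (r * x) * x ^ (n + j) = r * x ^ (n + (j + 1)) := by ring
      rw [e, h]
    have h2 := ih (r * x) h1
    refine (hst r).mpr ?_
    have e : r * x ^ (n + 1) = (r * x) * x ^ n := by ring
    rw [e, h2]

lemma wpr_iff (x : R) :
    WeaklyProregular ![x] ↔
      ∃ n : ℕ, 1 ≤ n ∧ ∀ r : R, r * x ^ n = 0 ↔ r * x ^ (n + 1) = 0 := by
  constructor
  · intro h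
    obtain ⟨m, hm, hprop⟩ := h 1 le_rfl
    refine ⟨m, hm, fun r => ⟨fun hr => by
      have e : r * x ^ (m + 1) = (r * x ^ m) * x := by ring
      rw [e, hr, zero_mul], fun hr => ?_⟩⟩
    -- from r * x^(m+1) = 0, get (r*x) ∈ Ann x^m, apply transition: (r*x) * x^(m-1) = 0 i.e. r x^m = 0
    have key : ∀ s : R, s * x ^ m = 0 → s * x ^ (m - 1) = 0 := by
      intro s hs
      obtain ⟨b, hb⟩ := hprop 0 (fun _ => s) (by
        funext t
        rw [koszulD0_apply]
        show x ^ m * s = 0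
        rw [mul_comm]; exact hs)
      have := congrFun hb ⟨{0}, rfl⟩
      rw [koszulD1_zero, koszulTr_apply] at this
      exact (by rw [mul_comm]; exact this.symm)
    obtain ⟨k, rfl⟩ : ∃ k, m = k + 1 := ⟨m - 1, by omega⟩
    have h1 : (r * x) * x ^ (k + 1) = 0 := by
      have e : (r * x) * x ^ (k + 1) = r * x ^ (k + 1 + 1) := by ring
      rw [e, hr]
    have h2 := key (r * x) h1
    simp only [Nat.add_sub_cancel] at h2
    have e : r * x ^ (k + 1) = (r * x) * x ^ k := by ring
    rw [e, h2]
  · rintro ⟨n, hn, hst⟩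
    intro k hk
    refine ⟨n + k, by omega, ?_⟩
    rintro (_ | i) z hz
    · -- i = 0
      refine ⟨0, ?_⟩
      funext t
      rw [koszulTr_apply, koszulD1_zero]
      have hz0 := congrFun hz ⟨∅, rfl⟩
      rw [koszulD0_apply] at hz0
      have : z t * x ^ (n + k) = 0 := by
        rw [fin1_subtype_one t, mul_comm]
        exact hz0
      have := ann_stab_of x n hst k _ this
      rw [show n + k - k = n from by omega, mul_comm]
      exact this.symm
    · exact ⟨0, funext fun t => (fin1_no_big t).elim⟩

end PartA
section PartC
variable {R : Type*} [CommRing R]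

lemma cechD1_zero (x : R) (c : CechC ![x] R 1) : cechD ![x] R 1 c = 0 :=
  funext fun t => (fin1_no_big t).elim

/-- If `s * x ^ n = 0` then `s` kills all of `C^1`. -/
lemma smul_kill {x s : R} {n : ℕ} (hs : s * x ^ n = 0) (c : CechC ![x] R 1) :
    s • c = 0 := by
  funext t
  obtain ⟨t, ht⟩ := t
  obtain rfl : t = {0} := by
    obtain ⟨a, rfl⟩ := Finset.card_eq_one.mp ht
    simp [Subsingleton.elim a 0]
  show s • c ⟨{0}, ht⟩ = 0
  induction c ⟨{0}, ht⟩ using LocalizedModule.induction_on with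
  | h m u =>
    rw [LocalizedModule.smul'_mk, ← LocalizedModule.zero_mk u, LocalizedModule.mk_eq]
    refine ⟨⟨(∏ j ∈ ({0} : Finset (Fin 1)), ![x] j) ^ n, n, rfl⟩, ?_⟩
    have hv : ∀ (v w : Submonoid.powers (∏ j ∈ ({0} : Finset (Fin 1)), ![x] j)) (r : R),
        v • w • r = (v : R) * ((w : R) * r) := fun _ _ _ => rfl
    rw [hv, hv]
    have hπ : (∏ j ∈ ({0} : Finset (Fin 1)), ![x] j) = x := by simp
    simp only [smul_eq_mul, mul_zero, hπ]
    linear_combination ((u : R) * m) * hs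

lemma cechD0_apply (x : R) (w : CechC ![x] R 0) :
    cechD ![x] R 0 w ⟨{0}, rfl⟩ =
      cechLoc (∏ k ∈ ({0} : Finset (Fin 1)).erase 0, ![x] k)
        (∏ k ∈ ({0} : Finset (Fin 1)), ![x] k)
        (Finset.prod_dvd_prod_of_subset _ _ _ (Finset.erase_subset _ _))
        (w ⟨({0} : Finset (Fin 1)).erase 0, by simp⟩) := by
  show ∑ j ∈ (({0} : Finset (Fin 1))).attach, _ = _
  have hmem : (0 : Fin 1) ∈ ({0} : Finset (Fin 1)) := by simp
  rw [show (({0} : Finset (Fin 1))).attach = {⟨0, hmem⟩} from by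
    ext j; simp [Subtype.ext_iff, Subsingleton.elim j.1 0]]
  rw [Finset.sum_singleton]
  rw [show Finset.filter (· < (0 : Fin 1)) ({0} : Finset (Fin 1)) = ∅ from by
    ext j; simp [Subsingleton.elim j 0]]
  simp only [Finset.card_empty, pow_zero, one_smul]

lemma cechLoc_mk_one {M : Type*} [AddCommGroup M] [Module R M] (a b : R) (hab : a ∣ b) (m : M) :
    cechLoc a b hab (LocalizedModule.mk m 1) = LocalizedModule.mk m 1 := by
  have h1 : cechLoc a b hab (LocalizedModule.mkLinearMap (Submonoid.powers a) M m)
      = LocalizedModule.mkLinearMap (Submonoid.powers b) M m := by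
    rw [← LinearMap.comp_apply]
    unfold cechLoc
    rw [LocalizedModule.lift_comp]
  simpa [LocalizedModule.mkLinearMap_apply] using h1

end PartC

section PartC2
set_option synthInstance.maxHeartbeats 1000000
set_option maxHeartbeats 1000000
variable {R : Type*} [CommRing R]

lemma cech_subsingleton {x s : R} {n : ℕ} (hs : s * x ^ n = 0) (p : PrimeSpectrum R)
    (hsp : s ∈ p.asIdeal.primeCompl) :
    Subsingleton (LocalizedModule p.asIdeal.primeCompl (CechH ![x] R 1)) := by
  have hsH : ∀ h : CechH ![x] R 1, s • h = 0 := by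
    intro h
    obtain ⟨⟨c, hc⟩, rfl⟩ := Submodule.Quotient.mk_surjective _ h
    rw [← Submodule.Quotient.mk_smul]
    have h0 : s • (⟨c, hc⟩ : LinearMap.ker (cechD ![x] R 1)) = 0 :=
      Subtype.ext (show s • c = (0 : CechC ![x] R 1) from smul_kill hs c)
    rw [h0, Submodule.Quotient.mk_zero]
  refine subsingleton_of_forall_eq 0 fun z => ?_
  induction z using LocalizedModule.induction_on with
  | h m u =>
    rw [← LocalizedModule.zero_mk u, LocalizedModule.mk_eq]
    refine ⟨⟨s, hsp⟩, ?_⟩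
    rw [Submonoid.smul_def, Submonoid.smul_def, Submonoid.smul_def, Submonoid.smul_def]
    rw [smul_zero, smul_zero, smul_comm]
    show (u : R) • s • m = 0
    rw [hsH m, smul_zero]

lemma cech_nontrivial {x : R} (p : PrimeSpectrum R) (hxp : x ∈ p.asIdeal)
    (q : Ideal R) (hq : q ∈ minimalPrimes R) (hqp : q ≤ p.asIdeal) (hxq : x ∉ q) :
    Nontrivial (LocalizedModule p.asIdeal.primeCompl (CechH ![x] R 1)) := by
  classical
  set c₁ : CechC ![x] R 1 :=
    fun t => LocalizedModule.mk 1 ⟨∏ j ∈ t.1, ![x] j, 1, pow_one _⟩ with hc₁def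
  have hc₁ : c₁ ∈ LinearMap.ker (cechD ![x] R 1) := LinearMap.mem_ker.mpr (cechD1_zero x c₁)
  set H : CechH ![x] R 1 := Submodule.Quotient.mk ⟨c₁, hc₁⟩ with hHdef
  refine nontrivial_of_ne (LocalizedModule.mk H 1) 0 fun h0 => ?_
  rw [← LocalizedModule.zero_mk (1 : p.asIdeal.primeCompl), LocalizedModule.mk_eq] at h0
  obtain ⟨v, hv⟩ := h0
  have hvH : (v : R) • H = 0 := by
    simpa only [one_smul, smul_zero, Submonoid.smul_def] using hv
  have hmem : (v : R) • (⟨c₁, hc₁⟩ : LinearMap.ker (cechD ![x] R 1)) ∈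
      (cechPrevRange ![x] R 1).comap (LinearMap.ker (cechD ![x] R 1)).subtype := by
    rw [← Submodule.Quotient.mk_eq_zero, Submodule.Quotient.mk_smul]
    exact hvH
  rw [Submodule.mem_comap] at hmem
  have hmem' : (v : R) • c₁ ∈ LinearMap.range (cechD ![x] R 0) := hmem
  obtain ⟨w, hw⟩ := hmem'
  have hw1 := congrFun hw ⟨{0}, rfl⟩
  rw [cechD0_apply] at hw1
  obtain ⟨r, u, hru⟩ := LocalizedModule.induction_on
    (β := fun z => ∃ r u, LocalizedModule.mk r u = z) (fun m s => ⟨m, s, rfl⟩)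
    (w ⟨({0} : Finset (Fin 1)).erase 0, by simp⟩)
  have ha : (∏ k ∈ ({0} : Finset (Fin 1)).erase 0, ![x] k) = 1 := by
    rw [Finset.erase_singleton, Finset.prod_empty]
  obtain ⟨k0, hk0⟩ := (Submonoid.mem_powers_iff _ _).mp u.2
  have hu1 : (u : R) = 1 := by rw [← hk0, ha, one_pow]
  have hmk : LocalizedModule.mk r u = LocalizedModule.mk r 1 :=
    LocalizedModule.mk_eq.mpr ⟨1, by simp [Submonoid.smul_def, hu1]⟩
  rw [← hru, hmk, cechLoc_mk_one] at hw1
  have hrhs : ((v : R) • c₁) ⟨{0}, rfl⟩ =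
      LocalizedModule.mk (v : R) (⟨∏ j ∈ ({0} : Finset (Fin 1)), ![x] j, 1, pow_one _⟩ :
        Submonoid.powers (∏ j ∈ ({0} : Finset (Fin 1)), ![x] j)) := by
    show (v : R) • c₁ ⟨{0}, rfl⟩ = _
    rw [hc₁def]
    rw [LocalizedModule.smul'_mk]
    simp
  rw [hrhs] at hw1
  rw [LocalizedModule.mk_eq] at hw1
  obtain ⟨t, ht⟩ := hw1
  obtain ⟨k, hk⟩ := (Submonoid.mem_powers_iff _ _).mp t.2
  have hπ : (∏ j ∈ ({0} : Finset (Fin 1)), ![x] j) = x := by simp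
  have heq : x ^ k * (x * r) = x ^ k * (v : R) := by
    have h1 : (t : R) * ((∏ j ∈ ({0} : Finset (Fin 1)), ![x] j) * r) = (t : R) * (v : R) := by
      simpa [Submonoid.smul_def, smul_eq_mul] using ht
    rw [← hk, hπ] at h1
    exact h1
  haveI hqprime : q.IsPrime := hq.1.1
  have hq' : (v : R) - x * r ∈ q := by
    have h0 : ((v : R) - x * r) * x ^ k = 0 := by linear_combination -heq
    have hmemq : ((v : R) - x * r) * x ^ k ∈ q := by rw [h0]; exact q.zero_mem
    rcases hqprime.mem_or_mem hmemq with h | h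
    · exact h
    · exact (hxq (hqprime.mem_of_pow_mem _ h)).elim
  refine v.2 ?_
  have h1 : (v : R) - x * r ∈ p.asIdeal := hqp hq'
  have h2 : x * r ∈ p.asIdeal := p.asIdeal.mul_mem_right r hxp
  simpa using p.asIdeal.add_mem h1 h2

end PartC2

section PartD
variable {R : Type*} [CommRing R]

lemma height_iff (x : R) :
    1 ≤ idealHeight (Ideal.span ({x} : Set R)) ↔
      ∀ p : PrimeSpectrum R, x ∈ p.asIdeal → p.asIdeal ∉ minimalPrimes R := by
  rw [idealHeight, le_iInf_iff]
  constructor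
  · intro h p hxp hmin
    have h1 := h ⟨p, by rwa [Ideal.span_singleton_le_iff_mem]⟩
    rw [Order.height_eq_zero.mpr (PrimeSpectrum.isMin_iff.mpr hmin)] at h1
    simp at h1
  · rintro h ⟨p, hle⟩
    rw [ENat.one_le_iff_ne_zero, Ne, Order.height_eq_zero]
    exact fun hm => h p (hle (Ideal.mem_span_singleton_self x)) (PrimeSpectrum.isMin_iff.mp hm)

lemma exists_kill {x : R} (p : PrimeSpectrum R) (hxp : x ∈ p.asIdeal)
    (hmin : p.asIdeal ∈ minimalPrimes R) :
    ∃ (s : R) (n : ℕ), s ∈ p.asIdeal.primeCompl ∧ s * x ^ n = 0 := by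
  haveI := p.isPrime
  have hnil : IsNilpotent (algebraMap R (Localization p.asIdeal.primeCompl) x) := by
    have h := IsLocalization.AtPrime.radical_map_of_mem_minimalPrimes
      (A := Localization.AtPrime p.asIdeal) p.asIdeal ⊥ hmin
    have hm : algebraMap R (Localization.AtPrime p.asIdeal) x ∈
        p.asIdeal.map (algebraMap R (Localization.AtPrime p.asIdeal)) := Ideal.mem_map_of_mem _ hxp
    rw [← h, Ideal.map_bot] at hm
    obtain ⟨n, hn⟩ := hm
    exact ⟨n, by simpa using hn⟩
  obtain ⟨n, hn⟩ := hnil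
  rw [← map_pow] at hn
  obtain ⟨⟨s, hsmem⟩, hs⟩ := (IsLocalization.map_eq_zero_iff p.asIdeal.primeCompl _ _).mp hn
  exact ⟨s, n, hsmem, hs⟩

end PartD

/-- A nonunit `x` of a commutative ring `R` is a parameter on `R` (weakly proregular, with
`H^1_x(R)_p ≠ 0` for all primes `p ∋ x`) iff `ht(xR) ≥ 1` and the annihilator chain of `x`
stabilizes: `(0 : x^n) = (0 : x^{n+1})` for some `n ≥ 1`. -/
theorem stmt_9 {R : Type*} [CommRing R] (x : R) (hx : ¬ IsUnit x) :
    (WeaklyProregular ![x] ∧ Ideal.span {x} ≠ ⊤ ∧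
        ∀ p : PrimeSpectrum R, x ∈ p.asIdeal →
          Nontrivial (LocalizedModule p.asIdeal.primeCompl (CechH ![x] R 1))) ↔
      (1 ≤ idealHeight (Ideal.span {x}) ∧
        ∃ n : ℕ, 1 ≤ n ∧ ∀ r : R, r * x ^ n = 0 ↔ r * x ^ (n + 1) = 0) := by
  constructor
  · rintro ⟨hwpr, -, hnt⟩
    refine ⟨?_, (wpr_iff x).mp hwpr⟩
    rw [height_iff]
    intro p hxp hmin
    obtain ⟨s, n, hsc, hs⟩ := exists_kill p hxp hmin
    haveI := hnt p hxp
    exact not_subsingleton _ (cech_subsingleton hs p hsc)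
  · rintro ⟨hht, n, hn, hst⟩
    refine ⟨(wpr_iff x).mpr ⟨n, hn, hst⟩, ?_, ?_⟩
    · exact fun htop => hx (Ideal.span_singleton_eq_top.mp htop)
    · intro p hxp
      haveI := p.isPrime
      obtain ⟨q, hq, hqp⟩ := Ideal.exists_minimalPrimes_le (I := (⊥ : Ideal R))
        (J := p.asIdeal) bot_le
      have hxq : x ∉ q := by
        intro hxq
        rw [height_iff] at hht
        exact hht ⟨q, hq.1.1⟩ hxq hq
      exact cech_nontrivial p hxp q hq hqp hxq

end
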